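/- Symmetric Ekeland principle I. In the abstract symmetrization framework, let S' be a closed subset of S such that u^H ∈ S' for all u ∈ S' and H ∈ ℋ*, and u* ∈ S' for all u ∈ S'. Let f : S' → ℝ ∪ {+∞} be a proper, bounded below, lower semicontinuous functional such that f(u^H) ≤ f(u) for all u ∈ S' and all H ∈ ℋ*. Then for all ρ > 0 and σ > 0 and every u ∈ S' with f(u) ≤ inf_{S'} f + σρ, there exists v ∈ S' such that: (a) ‖v − v*‖_V < (2K+1)ρ; (b) f(w) ≥ f(v) − σ‖w − v‖ for all w ∈ S'; (c) f(v) ≤ f(u); (d) ‖v − u‖ ≤ ρ + ‖T_ρ u − u‖. -/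

import Mathlib

open Filter Topology Metric Set

theorem my_ekeland {M : Type*} [MetricSpace M] [CompleteSpace M]
    (g : M → ℝ) (hlsc : LowerSemicontinuous g)
    (c : ℝ) (hbdd : ∀ x, c ≤ g x)
    (σ : ℝ) (hσ : 0 < σ) (x₀ : M) :
    ∃ v : M, g v + σ * dist v x₀ ≤ g x₀ ∧ ∀ w : M, g v ≤ g w + σ * dist w v := by
  set F : M → Set M := fun x => {y | g y + σ * dist y x ≤ g x} with hF
  have hself : ∀ x, x ∈ F x := by intro x; simp [hF]
  have htrans : ∀ x y z, y ∈ F x → z ∈ F y → z ∈ F x := by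
    intro x y z hy hz
    simp only [hF, Set.mem_setOf_eq] at *
    have h3 : σ * dist z x ≤ σ * (dist z y + dist y x) :=
      mul_le_mul_of_nonneg_left (dist_triangle z y x) hσ.le
    nlinarith [dist_nonneg (x := z) (y := y), dist_nonneg (x := y) (y := x)]
  have hne : ∀ x : M, Nonempty (F x) := fun x => ⟨⟨x, hself x⟩⟩
  have hbddF : ∀ x : M, BddBelow (Set.range fun z : F x => g z.1) := by
    intro x; exact ⟨c, by rintro r ⟨z, rfl⟩; exact hbdd _⟩
  have hstep : ∀ (x : M) (n : ℕ), ∃ y : M, y ∈ F x ∧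
      g y < (⨅ z : F x, g z.1) + (1/2)^n := by
    intro x n
    haveI := hne x
    have hlt : (⨅ z : F x, g z.1) < (⨅ z : F x, g z.1) + (1/2)^n := by
      have : (0:ℝ) < (1/2)^n := by positivity
      linarith
    obtain ⟨⟨y, hy⟩, hy2⟩ := exists_lt_of_ciInf_lt hlt
    exact ⟨y, hy, hy2⟩
  choose next hnext1 hnext2 using hstep
  set s : ℕ → M := fun n => Nat.rec x₀ (fun n x => next x n) n with hs
  have hs0 : s 0 = x₀ := rfl
  have hssucc : ∀ n, s (n+1) = next (s n) n := fun n => rfl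
  have h1 : ∀ n, s (n+1) ∈ F (s n) := fun n => hnext1 (s n) n
  have h2 : ∀ n, g (s (n+1)) < (⨅ z : F (s n), g z.1) + (1/2)^n :=
    fun n => hnext2 (s n) n
  have hmem : ∀ n m, n ≤ m → s m ∈ F (s n) := by
    intro n m hnm
    induction m, hnm using Nat.le_induction with
    | base => exact hself _
    | succ m hnm ih => exact htrans _ _ _ ih (h1 m)
  -- g ∘ s is antitone, bounded below
  have hganti : ∀ n m, n ≤ m → g (s m) ≤ g (s n) := by
    intro n m hnm
    have := hmem n m hnm
    simp only [hF, Set.mem_setOf_eq] at this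
    nlinarith [dist_nonneg (x := s m) (y := s n)]
  set L : ℝ := ⨅ n, g (s n) with hL
  have hbddL : BddBelow (Set.range fun n => g (s n)) :=
    ⟨c, by rintro r ⟨n, rfl⟩; exact hbdd _⟩
  have hLle : ∀ n, L ≤ g (s n) := fun n => ciInf_le hbddL n
  have hgL : Tendsto (fun n => g (s n)) atTop (𝓝 L) :=
    tendsto_atTop_ciInf (fun a b hab => hganti a b hab) hbddL
  -- s is Cauchy
  have hkey : ∀ n m, n ≤ m → σ * dist (s m) (s n) ≤ g (s n) - g (s m) := by
    intro n m hnm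
    have := hmem n m hnm
    simp only [hF, Set.mem_setOf_eq] at this
    linarith
  have hcauchy : CauchySeq s := by
    apply cauchySeq_of_le_tendsto_0 (fun N => (g (s N) - L) / σ)
    · intro n m N hn hm
      rcases le_total n m with h | h
      · have := hkey n m h
        have h2 := hganti N n hn
        have h3 := hLle m
        rw [dist_comm]
        rw [le_div_iff₀ hσ]
        nlinarith
      · have := hkey m n h
        have h2 := hganti N m hm
        have h3 := hLle n
        rw [le_div_iff₀ hσ]
        nlinarith
    · have : Tendsto (fun N => (g (s N) - L) / σ) atTop (𝓝 ((L - L)/σ)) :=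
        ((hgL.sub_const L).div_const σ)
      simpa using this
  obtain ⟨v, hv⟩ := cauchySeq_tendsto_of_complete hcauchy
  -- g v ≤ L
  have hgvL : g v ≤ L := by
    by_contra h
    push_neg at h
    set a := (L + g v) / 2 with ha
    have ha1 : a < g v := by simp [ha]; linarith
    have ha2 : L < a := by simp [ha]; linarith
    have := hlsc v a ha1
    have hev : ∀ᶠ n in atTop, a < g (s n) := hv.eventually this
    have : a ≤ L := ge_of_tendsto hgL (hev.mono fun n hn => hn.le)
    linarith
  -- v ∈ F (s n)
  have hvmem : ∀ n, g v + σ * dist v (s n) ≤ g (s n) := by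
    intro n
    have hd : Tendsto (fun m => σ * dist (s m) (s n)) atTop (𝓝 (σ * dist v (s n))) :=
      (((hv.dist (tendsto_const_nhds (x := s n)))).const_mul σ)
    have hr : Tendsto (fun m => g (s n) - g (s m)) atTop (𝓝 (g (s n) - L)) :=
      (tendsto_const_nhds.sub hgL)
    have hle : σ * dist v (s n) ≤ g (s n) - L := by
      refine le_of_tendsto_of_tendsto hd hr ?_
      filter_upwards [eventually_ge_atTop n] with m hm
      exact hkey n m hm
    linarith
  refine ⟨v, by simpa [hs0] using hvmem 0, ?_⟩
  intro w
  by_contra hcon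
  push_neg at hcon
  have hwFv : w ∈ F v := by
    simp only [hF, Set.mem_setOf_eq]
    exact hcon.le
  have hvFn : ∀ n, v ∈ F (s n) := by
    intro n; simp only [hF, Set.mem_setOf_eq]; exact hvmem n
  have hwFn : ∀ n, w ∈ F (s n) := fun n => htrans _ _ _ (hvFn n) hwFv
  have hinfle : ∀ n, (⨅ z : F (s n), g z.1) ≤ g w := by
    intro n
    exact ciInf_le (hbddF _) ⟨w, hwFn n⟩
  have hlt : ∀ n, g (s (n+1)) < g w + (1/2)^n := by
    intro n
    have := h2 n
    have := hinfle n
    linarith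
  have hLw : L ≤ g w := by
    have ht1 : Tendsto (fun n => g (s (n+1))) atTop (𝓝 L) :=
      hgL.comp (tendsto_add_atTop_nat 1)
    have ht2 : Tendsto (fun n : ℕ => g w + (1/2:ℝ)^n) atTop (𝓝 (g w + 0)) :=
      tendsto_const_nhds.add (tendsto_pow_atTop_nhds_zero_of_lt_one (by norm_num) (by norm_num))
    have := le_of_tendsto_of_tendsto ht1 ht2 (Eventually.of_forall fun n => (hlt n).le)
    simpa using this
  have hd := dist_nonneg (x := w) (y := v)
  nlinarith

theorem symmetric_ekeland_I
    {X : Type*} [NormedAddCommGroup X] [NormedSpace ℝ X] [CompleteSpace X]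
    {V : Type*} [NormedAddCommGroup V] [NormedSpace ℝ V] [CompleteSpace V]
    {W : Type*} [NormedAddCommGroup W] [NormedSpace ℝ W] [CompleteSpace W]
    (ι : X →L[ℝ] V) (κ : V →L[ℝ] W)
    (K : ℝ) (hK : 0 < K) (hιK : ∀ u : X, ‖ι u‖ ≤ K * ‖u‖)
    (S : Set X)
    {P : Type*} [TopologicalSpace P] [PathConnectedSpace P]
    (pol : X → P → X) (sy : X → X)
    (hpolS : ∀ u ∈ S, ∀ H : P, pol u H ∈ S)
    (hsyS : ∀ u : X, sy u ∈ S)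
    (hpolCont : ContinuousOn (fun q : X × P => pol q.1 q.2) (S ×ˢ Set.univ))
    (hsypol : ∀ u ∈ S, ∀ H : P,
      pol (sy u) H = sy u ∧ sy (pol u H) = sy u ∧ pol (pol u H) H = pol u H)
    (happrox : ∃ Hs : ℕ → P, ∀ u ∈ S,
      Filter.Tendsto (fun m => ι (List.foldl pol u ((List.range m).map Hs)))
        Filter.atTop (nhds (ι (sy u))))
    (hpolContr : ∀ u ∈ S, ∀ v ∈ S, ∀ H : P, ‖ι (pol u H) - ι (pol v H)‖ ≤ ‖ι u - ι v‖)
    (Θ : X → X) (CΘ : ℝ) (hCΘ : 0 < CΘ)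
    (hΘS : ∀ u : X, Θ u ∈ S) (hΘid : ∀ u ∈ S, Θ u = u)
    (hΘlip : ∀ u v : X, ‖ι (Θ u) - ι (Θ v)‖ ≤ CΘ * ‖ι u - ι v‖)
    (hpolext : ∀ u : X, ∀ H : P, pol u H = pol (Θ u) H)
    (hsyext : ∀ u : X, sy u = sy (Θ u))
    (T : ℝ → X → X)
    (hTS : ∀ ρ > (0:ℝ), ∀ u ∈ S, T ρ u ∈ S)
    (hTpol : ∀ ρ > (0:ℝ), ∀ u ∈ S, ∃ l : List P, T ρ u = List.foldl pol u l)
    (hTsy : ∀ ρ > (0:ℝ), ∀ u ∈ S, sy (T ρ u) = sy u)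
    (hTapprox : ∀ ρ > (0:ℝ), ∀ u ∈ S, ‖ι (T ρ u) - ι (sy u)‖ < ρ)
    (S' : Set X) (hS'S : S' ⊆ S) (hS'closed : IsClosed S')
    (hS'pol : ∀ u ∈ S', ∀ H : P, pol u H ∈ S')
    (hS'sy : ∀ u ∈ S', sy u ∈ S')
    (hTS' : ∀ ρ > (0:ℝ), ∀ u ∈ S', T ρ u ∈ S')
    (f : X → EReal)
    (hfproper : ∃ u ∈ S', f u ≠ ⊤)
    (hfbdd : ∃ c : ℝ, ∀ u ∈ S', (c : EReal) ≤ f u)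
    (hflsc : LowerSemicontinuousOn f S')
    (hfpol : ∀ u ∈ S', ∀ H : P, f (pol u H) ≤ f u)
    (ρ σ : ℝ) (hρ : 0 < ρ) (hσ : 0 < σ)
    (u : X) (hu : u ∈ S')
    (hfu : f u ≤ (⨅ w : S', f w) + ((σ * ρ : ℝ) : EReal)) :
    ∃ v ∈ S',
      ‖ι v - ι (sy v)‖ < (2 * K + 1) * ρ ∧
      (∀ w ∈ S', f v - ((σ * ‖w - v‖ : ℝ) : EReal) ≤ f w) ∧
      f v ≤ f u ∧
      ‖v - u‖ ≤ ρ + ‖T ρ u - u‖ := by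
  classical
  have huS : u ∈ S := hS'S hu
  -- f is nonincreasing along iterated polarizations within S'
  have hfold : ∀ (l : List P) (w : X), w ∈ S' →
      List.foldl pol w l ∈ S' ∧ f (List.foldl pol w l) ≤ f w := by
    intro l
    induction l with
    | nil => intro w hw; exact ⟨hw, le_refl _⟩
    | cons H t ih =>
      intro w hw
      obtain ⟨m1, m2⟩ := ih (pol w H) (hS'pol w hw H)
      exact ⟨m1, m2.trans (hfpol w hw H)⟩
  -- symmetrization is a contraction in V on S
  have hsycontr : ∀ a ∈ S, ∀ b ∈ S, ‖ι (sy a) - ι (sy b)‖ ≤ ‖ι a - ι b‖ := by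
    obtain ⟨Hs, hHs⟩ := happrox
    have hctr : ∀ (l : List P) (x : X), x ∈ S → ∀ (y : X), y ∈ S →
        List.foldl pol x l ∈ S ∧ List.foldl pol y l ∈ S ∧
        ‖ι (List.foldl pol x l) - ι (List.foldl pol y l)‖ ≤ ‖ι x - ι y‖ := by
      intro l
      induction l with
      | nil => intro x hx y hy; exact ⟨hx, hy, le_refl _⟩
      | cons H t ih =>
        intro x hx y hy
        obtain ⟨m1, m2, m3⟩ := ih (pol x H) (hpolS x hx H) (pol y H) (hpolS y hy H)
        exact ⟨m1, m2, m3.trans (hpolContr x hx y hy H)⟩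
    intro a ha b hb
    have t1 := hHs a ha
    have t2 := hHs b hb
    have hnorm : Tendsto (fun m => ‖ι (List.foldl pol a ((List.range m).map Hs)) -
        ι (List.foldl pol b ((List.range m).map Hs))‖) atTop (𝓝 ‖ι (sy a) - ι (sy b)‖) :=
      (t1.sub t2).norm
    exact le_of_tendsto hnorm (Eventually.of_forall fun m => (hctr _ a ha b hb).2.2)
  set u₀ := T ρ u with hu₀def
  have hu₀ : u₀ ∈ S' := hTS' ρ hρ u hu
  have hu₀S : u₀ ∈ S := hS'S hu₀
  have hfu₀u : f u₀ ≤ f u := by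
    obtain ⟨l, hl⟩ := hTpol ρ hρ u huS
    rw [hu₀def, hl]
    exact (hfold l u hu).2
  obtain ⟨c, hc⟩ := hfbdd
  -- finiteness facts
  have hinf_top : (⨅ w : S', f w) ≠ ⊤ := by
    obtain ⟨u', hu', hfu'⟩ := hfproper
    exact ne_top_of_le_ne_top hfu' (iInf_le (fun w : S' => f w.1) ⟨u', hu'⟩)
  have hfu_top : f u ≠ ⊤ :=
    ne_top_of_le_ne_top (EReal.add_lt_top hinf_top (EReal.coe_ne_top _)).ne hfu
  have hfu₀top : f u₀ ≠ ⊤ := ne_top_of_le_ne_top hfu_top hfu₀u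
  have hfu₀bot : f u₀ ≠ ⊥ := ((EReal.bot_lt_coe c).trans_le (hc u₀ hu₀)).ne'
  have hb : ((f u₀).toReal : EReal) = f u₀ := EReal.coe_toReal hfu₀top hfu₀bot
  set b : ℝ := (f u₀).toReal with hbdef
  set g : ↥S' → ℝ := fun x => (min (f x.1) (f u₀)).toReal with hgdef
  have hmin_top : ∀ x : ↥S', min (f x.1) (f u₀) ≠ ⊤ :=
    fun x => ne_top_of_le_ne_top hfu₀top (min_le_right _ _)
  have hmin_bot : ∀ x : ↥S', min (f x.1) (f u₀) ≠ ⊥ := by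
    intro x
    exact (lt_min ((EReal.bot_lt_coe c).trans_le (hc x.1 x.2))
      ((EReal.bot_lt_coe c).trans_le (hc u₀ hu₀))).ne'
  have hgcoe : ∀ x : ↥S', ((g x : ℝ) : EReal) = min (f x.1) (f u₀) :=
    fun x => EReal.coe_toReal (hmin_top x) (hmin_bot x)
  have hglsc : LowerSemicontinuous g := by
    intro x a ha
    have ha' : (a : EReal) < min (f x.1) (f u₀) := by
      rw [← hgcoe x]; exact EReal.coe_lt_coe_iff.mpr ha
    have ha1 : (a : EReal) < f x.1 := ha'.trans_le (min_le_left _ _)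
    have ha2 : (a : EReal) < f u₀ := ha'.trans_le (min_le_right _ _)
    have hev : ∀ᶠ y in 𝓝[S'] x.1, (a : EReal) < f y := hflsc x.1 x.2 (a : EReal) ha1
    rw [← map_nhds_subtype_val, eventually_map] at hev
    filter_upwards [hev] with y hy
    rw [gt_iff_lt, ← EReal.coe_lt_coe_iff, hgcoe y]
    exact lt_min hy ha2
  have hgbdd : ∀ x : ↥S', min c b ≤ g x := by
    intro x
    rw [← EReal.coe_le_coe_iff, hgcoe x]
    exact le_min ((EReal.coe_le_coe_iff.mpr (min_le_left c b)).trans (hc x.1 x.2))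
      (le_trans (EReal.coe_le_coe_iff.mpr (min_le_right c b)) (le_of_eq hb))
  haveI : CompleteSpace ↥S' := hS'closed.completeSpace_coe
  obtain ⟨v, hv1, hv2⟩ := my_ekeland g hglsc (min c b) hgbdd σ hσ ⟨u₀, hu₀⟩
  have hgx₀ : g ⟨u₀, hu₀⟩ = b := by simp [hgdef, hbdef]
  have hdist_eq : dist v (⟨u₀, hu₀⟩ : ↥S') = ‖v.1 - u₀‖ := by
    rw [Subtype.dist_eq, dist_eq_norm]
  -- f v ≤ f u₀
  have hfv_le : f v.1 ≤ f u₀ := by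
    by_contra h
    push_neg at h
    have hgv : g v = b := by
      rw [hgdef]
      simp only
      rw [min_eq_right h.le, ← hbdef]
    have hd0 : dist v (⟨u₀, hu₀⟩ : ↥S') ≤ 0 := by
      rw [hgv, hgx₀] at hv1
      nlinarith [hv1]
    have hveq : v = (⟨u₀, hu₀⟩ : ↥S') :=
      eq_of_dist_eq_zero (le_antisymm hd0 dist_nonneg)
    rw [hveq] at h
    exact lt_irrefl _ h
  have hfveq : ((g v : ℝ) : EReal) = f v.1 := by
    rw [hgcoe v, min_eq_left hfv_le]
  have hgvb : g v ≤ b := by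
    rw [← EReal.coe_le_coe_iff, hfveq, hb]
    exact hfv_le
  -- distance bound : dist v u₀ ≤ ρ
  have hblegv : b ≤ g v + σ * ρ := by
    rw [← EReal.coe_le_coe_iff, EReal.coe_add, hfveq, hb]
    calc f u₀ ≤ f u := hfu₀u
      _ ≤ (⨅ w : S', f w) + ((σ * ρ : ℝ) : EReal) := hfu
      _ ≤ f v.1 + ((σ * ρ : ℝ) : EReal) :=
          add_le_add (iInf_le (fun w : S' => f w.1) v) le_rfl
  have hdρ : ‖v.1 - u₀‖ ≤ ρ := by
    rw [hgx₀, hdist_eq] at hv1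
    nlinarith [hv1, hblegv]
  refine ⟨v.1, v.2, ?_, ?_, hfv_le.trans hfu₀u, ?_⟩
  · -- (a)
    have h1 : ‖ι v.1 - ι u₀‖ ≤ K * ρ := by
      calc ‖ι v.1 - ι u₀‖ = ‖ι (v.1 - u₀)‖ := by rw [map_sub]
        _ ≤ K * ‖v.1 - u₀‖ := hιK _
        _ ≤ K * ρ := mul_le_mul_of_nonneg_left hdρ hK.le
    have h2 : ‖ι u₀ - ι (sy u₀)‖ < ρ := by
      rw [hu₀def, hTsy ρ hρ u huS]
      exact hTapprox ρ hρ u huS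
    have h3 : ‖ι (sy u₀) - ι (sy v.1)‖ ≤ K * ρ := by
      refine (hsycontr u₀ hu₀S v.1 (hS'S v.2)).trans ?_
      rw [norm_sub_rev]
      exact h1
    have h4 := dist_triangle4 (ι v.1) (ι u₀) (ι (sy u₀)) (ι (sy v.1))
    simp only [dist_eq_norm] at h4
    have : ‖ι v.1 - ι (sy v.1)‖ < K * ρ + ρ + K * ρ := by linarith
    calc ‖ι v.1 - ι (sy v.1)‖ < K * ρ + ρ + K * ρ := this
      _ = (2 * K + 1) * ρ := by ring
  · -- (b)
    intro w hw
    have hdw : σ * dist (⟨w, hw⟩ : ↥S') v = σ * ‖w - v.1‖ := by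
      rw [Subtype.dist_eq, dist_eq_norm]
    have hsub : f v.1 - ((σ * ‖w - v.1‖ : ℝ) : EReal) =
        ((g v - σ * ‖w - v.1‖ : ℝ) : EReal) := by
      rw [EReal.coe_sub, hfveq]
    rw [hsub]
    rcases le_total (f w) (f u₀) with hwle | hwge
    · have hgw : ((g ⟨w, hw⟩ : ℝ) : EReal) = f w := by
        rw [hgcoe ⟨w, hw⟩, min_eq_left hwle]
      rw [← hgw, EReal.coe_le_coe_iff]
      have h5 := hv2 ⟨w, hw⟩
      rw [Subtype.dist_eq, dist_eq_norm] at h5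
      linarith
    · have hσd : (0:ℝ) ≤ σ * ‖w - v.1‖ := by positivity
      calc ((g v - σ * ‖w - v.1‖ : ℝ) : EReal) ≤ ((b : ℝ) : EReal) := by
            rw [EReal.coe_le_coe_iff]; linarith
        _ = f u₀ := hb
        _ ≤ f w := hwge
  · -- (d)
    have : ‖v.1 - u‖ ≤ ‖v.1 - u₀‖ + ‖u₀ - u‖ := by
      rw [← sub_add_sub_cancel v.1 u₀ u]
      exact norm_add_le _ _
    rw [hu₀def] at *
    calc ‖v.1 - u‖ ≤ ‖v.1 - T ρ u‖ + ‖T ρ u - u‖ := this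
      _ ≤ ρ + ‖T ρ u - u‖ := by linarith [hdρ]
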